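/- For a Markov chain on a measurable state space with transition kernel P and a measurable set A, the function x ↦ E_x[τ_A^+ · 1_{τ_A^+ < ∞}] (where τ_A^+ = inf{n ≥ 1 : X_n ∈ A}) is the minimal nonnegative solution V to the equation V(x) = ∫_{A^c} V(y) P(x, dy) + P_x(τ_A^+ < ∞) for all x in the state space. -/
import Mathlib

open MeasureTheory ENNReal

/-- `retProb P A n x` is the probability, starting from `x`, that the first return time
`τ_A^+ = inf {k ≥ 1 : X_k ∈ A}` equals `n + 1`, for the Markov chain with one-step
transition kernel `P`. -/
noncomputable def retProb {X : Type*} [MeasurableSpace X] (P : X → Measure X) (A : Set X) :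
    ℕ → X → ℝ≥0∞
  | 0 => fun x => P x A
  | (n + 1) => fun x => ∫⁻ y in Aᶜ, retProb P A n y ∂(P x)

lemma retProb_measurable {X : Type*} [MeasurableSpace X] {P : X → Measure X}
    (hPm : Measurable P) {A : Set X} (hA : MeasurableSet A) :
    ∀ n, Measurable (retProb P A n) := by
  intro n
  induction n with
  | zero => exact (Measure.measurable_coe hA).comp hPm
  | succ n ih =>
      have : (retProb P A (n + 1)) =
          fun x => ∫⁻ y, Aᶜ.indicator (retProb P A n) y ∂(P x) := by
        funext x
        rw [lintegral_indicator hA.compl]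
        rfl
      rw [this]
      exact (Measure.measurable_lintegral (ih.indicator hA.compl)).comp hPm

/-- The function `x ↦ E_x[τ_A^+ · 1_{τ_A^+ < ∞}] = ∑ (n+1) P_x(τ_A^+ = n+1)`
is the minimal nonnegative solution `V` of
`V(x) = ∫_{A^c} V(y) P(x, dy) + P_x(τ_A^+ < ∞)` on the whole state space. -/
theorem expected_return_time_is_minimal_solution
    {X : Type*} [MeasurableSpace X] (P : X → Measure X)
    (hP : ∀ x, IsProbabilityMeasure (P x)) (hPm : Measurable P)
    (A : Set X) (hA : MeasurableSet A) :
    (∀ x, (∑' n : ℕ, ((n : ℝ≥0∞) + 1) * retProb P A n x)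
        = (∫⁻ y in Aᶜ, (∑' n : ℕ, ((n : ℝ≥0∞) + 1) * retProb P A n y) ∂(P x))
          + ∑' n : ℕ, retProb P A n x) ∧
    (∀ V : X → ℝ≥0∞,
      (∀ x, V x = (∫⁻ y in Aᶜ, V y ∂(P x)) + ∑' n : ℕ, retProb P A n x) →
      ∀ x, (∑' n : ℕ, ((n : ℝ≥0∞) + 1) * retProb P A n x) ≤ V x) := by
  have hm := retProb_measurable hPm hA
  constructor
  · intro x
    have hsplit : (∑' n : ℕ, ((n : ℝ≥0∞) + 1) * retProb P A n x)
        = (∑' n : ℕ, (n : ℝ≥0∞) * retProb P A n x) + ∑' n : ℕ, retProb P A n x := by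
      rw [← ENNReal.tsum_add]
      congr 1; funext n; ring
    rw [hsplit]
    congr 1
    have hshift : (∑' n : ℕ, (n : ℝ≥0∞) * retProb P A n x)
        = ∑' n : ℕ, ((n : ℝ≥0∞) + 1) * retProb P A (n + 1) x := by
      rw [tsum_eq_zero_add' ENNReal.summable]
      simp [Nat.cast_add]
    rw [hshift]
    have hrec : ∀ n : ℕ, ((n : ℝ≥0∞) + 1) * retProb P A (n + 1) x
        = ∫⁻ y in Aᶜ, ((n : ℝ≥0∞) + 1) * retProb P A n y ∂(P x) := by
      intro n
      rw [lintegral_const_mul _ (hm n)]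
      rfl
    rw [tsum_congr hrec,
      ← lintegral_tsum (fun n => ((hm n).const_mul _).aemeasurable)]
  · intro V hV x
    have key : ∀ N : ℕ, ∀ x,
        (∑ n ∈ Finset.range N, ((n : ℝ≥0∞) + 1) * retProb P A n x) ≤ V x := by
      intro N
      induction N with
      | zero => simp
      | succ N ih =>
          intro x
          rw [hV x, Finset.sum_range_succ']
          have h1 : (∑ i ∈ Finset.range N, ((i : ℝ≥0∞) + 1) * retProb P A (i + 1) x)
              ≤ ∫⁻ y in Aᶜ, V y ∂(P x) := by
            have e1 : ∀ i ∈ Finset.range N,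
                ((i : ℝ≥0∞) + 1) * retProb P A (i + 1) x
                = ∫⁻ y in Aᶜ, ((i : ℝ≥0∞) + 1) * retProb P A i y ∂(P x) := by
              intro i _
              rw [lintegral_const_mul _ (hm i)]
              rfl
            rw [Finset.sum_congr rfl e1,
              ← lintegral_finset_sum _ (fun i _ => (hm i).const_mul _)]
            exact lintegral_mono fun y => ih y
          have h2 : (retProb P A 0 x + ∑ i ∈ Finset.range N, retProb P A (i + 1) x)
              ≤ ∑' n : ℕ, retProb P A n x := by
            rw [add_comm, ← Finset.sum_range_succ' (fun k => retProb P A k x) N]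
            exact ENNReal.sum_le_tsum _
          have expand : ∀ i ∈ Finset.range N,
              ((((i : ℕ) + 1 : ℕ) : ℝ≥0∞) + 1) * retProb P A (i + 1) x
              = ((i : ℝ≥0∞) + 1) * retProb P A (i + 1) x + retProb P A (i + 1) x := by
            intro i _
            push_cast
            ring
          calc (∑ i ∈ Finset.range N, ((((i : ℕ) + 1 : ℕ) : ℝ≥0∞) + 1) * retProb P A (i + 1) x)
                + (((0 : ℕ) : ℝ≥0∞) + 1) * retProb P A 0 x
              = (∑ i ∈ Finset.range N, ((i : ℝ≥0∞) + 1) * retProb P A (i + 1) x)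
                + (retProb P A 0 x + ∑ i ∈ Finset.range N, retProb P A (i + 1) x) := by
                rw [Finset.sum_congr rfl expand, Finset.sum_add_distrib]
                push_cast
                ring
            _ ≤ (∫⁻ y in Aᶜ, V y ∂(P x)) + ∑' n : ℕ, retProb P A n x := add_le_add h1 h2
    exact ENNReal.tsum_le_of_sum_range_le (fun N => key N x)
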